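/- Let A be a unital associative algebra over a field k, and λ, μ ∈ k. Define k-linear maps W, Z, X : A ⊗ A → A ⊗ A by W(a ⊗ b) = ab ⊗ 1 + λ 1 ⊗ ab − b ⊗ a, Z(a ⊗ b) = μ ab ⊗ 1 + 1 ⊗ ab − b ⊗ a, and X(a ⊗ b) = ab ⊗ 1 + 1 ⊗ ab − b ⊗ a. Then (W, X, Z) is a WXZ-system: [W,W,W] = 0, [Z,Z,Z] = 0, [W,X,X] = 0, and [X,X,Z] = 0. -/

import Mathlib

open TensorProduct

/-- The twist map `τ : V ⊗ V → V ⊗ V`, `v ⊗ w ↦ w ⊗ v`. -/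
noncomputable def twist (k V : Type*) [Field k] [AddCommGroup V] [Module k V] :
    V ⊗[k] V →ₗ[k] V ⊗[k] V := (TensorProduct.comm k V V).toLinearMap

/-- `R¹² = R ⊗ I` acting on `(V ⊗ V) ⊗ V`. -/
noncomputable def r12 {k V : Type*} [Field k] [AddCommGroup V] [Module k V]
    (R : V ⊗[k] V →ₗ[k] V ⊗[k] V) :
    (V ⊗[k] V) ⊗[k] V →ₗ[k] (V ⊗[k] V) ⊗[k] V :=
  TensorProduct.map R LinearMap.id

/-- `R²³ = I ⊗ R` acting on `(V ⊗ V) ⊗ V`. -/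
noncomputable def r23 {k V : Type*} [Field k] [AddCommGroup V] [Module k V]
    (R : V ⊗[k] V →ₗ[k] V ⊗[k] V) :
    (V ⊗[k] V) ⊗[k] V →ₗ[k] (V ⊗[k] V) ⊗[k] V :=
  (TensorProduct.assoc k V V V).symm.toLinearMap ∘ₗ
    TensorProduct.map LinearMap.id R ∘ₗ (TensorProduct.assoc k V V V).toLinearMap

/-- `I ⊗ τ` acting on `(V ⊗ V) ⊗ V`. -/
noncomputable def iTauI (k V : Type*) [Field k] [AddCommGroup V] [Module k V] :
    (V ⊗[k] V) ⊗[k] V →ₗ[k] (V ⊗[k] V) ⊗[k] V :=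
  (TensorProduct.assoc k V V V).symm.toLinearMap ∘ₗ
    TensorProduct.map LinearMap.id (twist k V) ∘ₗ (TensorProduct.assoc k V V V).toLinearMap

/-- `R¹³ = (I ⊗ τ)(R ⊗ I)(I ⊗ τ)` acting on `(V ⊗ V) ⊗ V`. -/
noncomputable def r13 {k V : Type*} [Field k] [AddCommGroup V] [Module k V]
    (R : V ⊗[k] V →ₗ[k] V ⊗[k] V) :
    (V ⊗[k] V) ⊗[k] V →ₗ[k] (V ⊗[k] V) ⊗[k] V :=
  iTauI k V ∘ₗ r12 R ∘ₗ iTauI k V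

/-- The Yang–Baxter commutator `[R,S,T] = R¹² S¹³ T²³ − T²³ S¹³ R¹²`. -/
noncomputable def ybComm {k V : Type*} [Field k] [AddCommGroup V] [Module k V]
    (R S T : V ⊗[k] V →ₗ[k] V ⊗[k] V) :
    (V ⊗[k] V) ⊗[k] V →ₗ[k] (V ⊗[k] V) ⊗[k] V :=
  r12 R ∘ₗ r13 S ∘ₗ r23 T - r23 T ∘ₗ r13 S ∘ₗ r12 R

set_option maxHeartbeats 3200000 in
/-- **Theorem (Nichita–Parashar).** For a unital associative `k`-algebra `A` and
`λ, μ ∈ k`, the maps `W(a⊗b) = ab⊗1 + λ 1⊗ab − b⊗a`, `Z(a⊗b) = μ ab⊗1 + 1⊗ab − b⊗a`,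
`X(a⊗b) = ab⊗1 + 1⊗ab − b⊗a` form a WXZ-system. -/
theorem algebra_WXZ_system {k A : Type*} [Field k] [Ring A] [Algebra k A] (lam mu : k) :
    let mul1 : A →ₗ[k] A ⊗[k] A := (TensorProduct.mk k A A).flip 1   -- x ↦ x ⊗ 1
    let mul2 : A →ₗ[k] A ⊗[k] A := TensorProduct.mk k A A 1          -- x ↦ 1 ⊗ x
    let W : A ⊗[k] A →ₗ[k] A ⊗[k] A :=
      mul1 ∘ₗ LinearMap.mul' k A + lam • (mul2 ∘ₗ LinearMap.mul' k A) - twist k A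
    let Z : A ⊗[k] A →ₗ[k] A ⊗[k] A :=
      mu • (mul1 ∘ₗ LinearMap.mul' k A) + mul2 ∘ₗ LinearMap.mul' k A - twist k A
    let X : A ⊗[k] A →ₗ[k] A ⊗[k] A :=
      mul1 ∘ₗ LinearMap.mul' k A + mul2 ∘ₗ LinearMap.mul' k A - twist k A
    ybComm W W W = 0 ∧ ybComm Z Z Z = 0 ∧ ybComm W X X = 0 ∧ ybComm X X Z = 0 := by
  intro mul1 mul2 W Z X
  refine ⟨?_, ?_, ?_, ?_⟩ <;>
  · apply TensorProduct.ext
    apply TensorProduct.ext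
    ext a b c
    simp only [ybComm, r12, r13, r23, iTauI, twist, W, Z, X, mul1, mul2,
      LinearMap.sub_apply, LinearMap.comp_apply, LinearMap.add_apply, LinearMap.smul_apply,
      TensorProduct.map_tmul, TensorProduct.mk_apply, LinearMap.mul'_apply,
      LinearMap.flip_apply, LinearMap.id_apply, LinearEquiv.coe_coe,
      TensorProduct.assoc_tmul, TensorProduct.assoc_symm_tmul, TensorProduct.comm_tmul,
      TensorProduct.tmul_add, TensorProduct.add_tmul, TensorProduct.tmul_sub,
      TensorProduct.sub_tmul, TensorProduct.tmul_smul, TensorProduct.smul_tmul',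
      map_add, map_sub, map_smul, LinearMap.zero_apply, LinearMap.compr₂_apply, LinearMap.compr₂ₛₗ_apply,
      smul_mul_assoc, mul_smul_comm, smul_smul,
      mul_one, one_mul, mul_assoc]
    module
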